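/- arXiv:2003.06723 — 2 statements merged into one kernel-verified Lean document; each statement's English description precedes it below -/
import Mathlib

section
/- Let n > p ≥ 1, let Z be a real n × p matrix such that ZᵀZ is positive definite, let D ∈ ℝⁿ, γ̂ = (ZᵀZ)⁻¹ZᵀD, and suppose the residual sum of squares RSS = ‖D − Zγ̂‖₂² is strictly positive. Let C₀ > 0, define the F-statistic F = (‖Zγ̂‖₂²/p) / (RSS/(n−p)), the penalty λ = √(C₀ · (p/(n−p)) · RSS), and S = (ZᵀZ)^{−1/2} ZᵀD, where (ZᵀZ)^{1/2} is the positive-definite square root of ZᵀZ. Then F > C₀ if and only if ‖S‖₂ > λ; equivalently, F > C₀ if and only if the unique global minimizer v̂ of v ↦ (1/2)‖v − S‖₂² + λ‖v‖₂ over ℝ^p is nonzero. -/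
open Matrix

/-- the F-test exceeding threshold `C₀` is equivalent to `‖S‖₂ > λ`,
equivalently to the group-lasso minimizer being nonzero. -/
theorem Ftest_iff_grouplasso_nonzero (n p : ℕ) (hp : 1 ≤ p) (hnp : p < n)
    (Z : Matrix (Fin n) (Fin p) ℝ) (hZ : (Zᵀ * Z).PosDef)
    (D : Fin n → ℝ)
    (γhat : Fin p → ℝ) (hγ : γhat = (Zᵀ * Z)⁻¹ *ᵥ (Zᵀ *ᵥ D))
    (RSS : ℝ) (hRSS : RSS = ∑ i, (D i - (Z *ᵥ γhat) i) ^ 2) (hRSSpos : 0 < RSS)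
    (C0 : ℝ) (hC0 : 0 < C0)
    (F : ℝ) (hF : F = ((∑ i, ((Z *ᵥ γhat) i) ^ 2) / (p : ℝ)) / (RSS / ((n : ℝ) - (p : ℝ))))
    (lam : ℝ) (hlamdef : lam = Real.sqrt (C0 * ((p : ℝ) / ((n : ℝ) - (p : ℝ))) * RSS))
    (S : Fin p → ℝ) (hS : S = ((hZ.isHermitian.eigenvectorUnitary : Matrix (Fin p) (Fin p) ℝ) *
      diagonal ((↑) ∘ (Real.sqrt ∘ hZ.isHermitian.eigenvalues)) *
      (star hZ.isHermitian.eigenvectorUnitary : Matrix (Fin p) (Fin p) ℝ))⁻¹ *ᵥ (Zᵀ *ᵥ D)) :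
    (C0 < F ↔ lam < Real.sqrt (∑ j, S j ^ 2)) ∧
    (∀ vhat : Fin p → ℝ,
      (∀ v : Fin p → ℝ,
        (1 / 2) * (∑ j, (vhat j - S j) ^ 2) + lam * Real.sqrt (∑ j, vhat j ^ 2) ≤
        (1 / 2) * (∑ j, (v j - S j) ^ 2) + lam * Real.sqrt (∑ j, v j ^ 2)) →
      (C0 < F ↔ vhat ≠ 0)) := by
  have hq : (0:ℝ) < (p:ℝ) := by exact_mod_cast Nat.lt_of_lt_of_le Nat.zero_lt_one hp
  have hm : (0:ℝ) < (n:ℝ) - (p:ℝ) := by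
    have : (p:ℝ) < (n:ℝ) := by exact_mod_cast hnp
    linarith
  set A := Zᵀ * Z with hAdef
  set M := ((hZ.isHermitian.eigenvectorUnitary : Matrix (Fin p) (Fin p) ℝ) *
      diagonal ((↑) ∘ (Real.sqrt ∘ hZ.isHermitian.eigenvalues)) *
      (star hZ.isHermitian.eigenvectorUnitary : Matrix (Fin p) (Fin p) ℝ)) with hMdef
  set w := Zᵀ *ᵥ D with hwdef
  have hMM : M * M = A := by
    have hsp := hZ.isHermitian.spectral_theorem
    rw [Unitary.conjStarAlgAut_apply] at hsp
    rw [hMdef]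
    calc _ = (hZ.isHermitian.eigenvectorUnitary : Matrix (Fin p) (Fin p) ℝ) *
          (diagonal ((↑) ∘ (Real.sqrt ∘ hZ.isHermitian.eigenvalues)) *
          ((star hZ.isHermitian.eigenvectorUnitary : Matrix (Fin p) (Fin p) ℝ) *
            (hZ.isHermitian.eigenvectorUnitary : Matrix (Fin p) (Fin p) ℝ)) *
          diagonal ((↑) ∘ (Real.sqrt ∘ hZ.isHermitian.eigenvalues))) *
          (star hZ.isHermitian.eigenvectorUnitary : Matrix (Fin p) (Fin p) ℝ) := by
            simp only [Matrix.mul_assoc]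
      _ = _ := by
        rw [Unitary.coe_star_mul_self, Matrix.mul_one, diagonal_mul_diagonal]
        conv_rhs => rw [hsp]
        congr 3
        funext i
        simp [Real.mul_self_sqrt (hZ.posSemidef.eigenvalues_nonneg i)]
  have hMher : Mᴴ = M := by
    rw [hMdef, conjTranspose_mul, conjTranspose_mul, star_eq_conjTranspose,
      conjTranspose_conjTranspose, diagonal_conjTranspose, Matrix.mul_assoc]
    congr 2
  have hMt : Mᵀ = M := by simpa using hMher
  have hAdetu : IsUnit A.det := hZ.det_pos.ne'.isUnit
  have hAinv2 : M⁻¹ * M⁻¹ = A⁻¹ := by rw [← Matrix.mul_inv_rev, hMM]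
  -- the two quadratic forms agree
  have hkey : (∑ i, ((Z *ᵥ γhat) i) ^ 2) = ∑ j, S j ^ 2 := by
    have h1 : (∑ i, ((Z *ᵥ γhat) i) ^ 2) = (Z *ᵥ γhat) ⬝ᵥ (Z *ᵥ γhat) := by
      simp [dotProduct, sq]
    have h2 : (∑ j, S j ^ 2) = S ⬝ᵥ S := by simp [dotProduct, sq]
    rw [h1, h2]
    have hleft : (Z *ᵥ γhat) ⬝ᵥ (Z *ᵥ γhat) = w ⬝ᵥ γhat := by
      calc (Z *ᵥ γhat) ⬝ᵥ (Z *ᵥ γhat)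
          = ((Z *ᵥ γhat) ᵥ* Z) ⬝ᵥ γhat := dotProduct_mulVec _ _ _
        _ = (Zᵀ *ᵥ (Z *ᵥ γhat)) ⬝ᵥ γhat := by rw [mulVec_transpose]
        _ = (A *ᵥ γhat) ⬝ᵥ γhat := by rw [mulVec_mulVec]
        _ = w ⬝ᵥ γhat := by
              rw [hγ, mulVec_mulVec, Matrix.mul_nonsing_inv _ hAdetu, one_mulVec]
    have hright : S ⬝ᵥ S = w ⬝ᵥ γhat := by
      calc S ⬝ᵥ S
          = S ⬝ᵥ (M⁻¹ *ᵥ w) := by rw [← hS]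
        _ = (S ᵥ* M⁻¹) ⬝ᵥ w := dotProduct_mulVec _ _ _
        _ = ((M⁻¹)ᵀ *ᵥ S) ⬝ᵥ w := by rw [mulVec_transpose]
        _ = (M⁻¹ *ᵥ S) ⬝ᵥ w := by rw [Matrix.transpose_nonsing_inv, hMt]
        _ = ((M⁻¹ * M⁻¹) *ᵥ w) ⬝ᵥ w := by rw [hS, mulVec_mulVec]
        _ = γhat ⬝ᵥ w := by rw [hAinv2, ← hγ]
        _ = w ⬝ᵥ γhat := dotProduct_comm _ _
    rw [hleft, hright]
  have hlamnn : 0 ≤ lam := hlamdef ▸ Real.sqrt_nonneg _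
  have hlam2 : lam ^ 2 = C0 * (RSS / ((n:ℝ) - (p:ℝ))) * (p:ℝ) := by
    rw [hlamdef, Real.sq_sqrt (by positivity)]; ring
  have key1 : C0 < F ↔ lam < Real.sqrt (∑ j, S j ^ 2) := by
    rw [Real.lt_sqrt hlamnn, hlam2, hF, hkey,
      lt_div_iff₀ (div_pos hRSSpos hm), lt_div_iff₀ hq]
  refine ⟨key1, fun vhat hmin => ?_⟩
  rw [key1]
  set Q := ∑ j, S j ^ 2 with hQdef
  have hQ0 : 0 ≤ Q := Finset.sum_nonneg fun j _ => sq_nonneg _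
  set sQ := Real.sqrt Q with hsQdef
  have hsQ0 : 0 ≤ sQ := Real.sqrt_nonneg _
  have hQsq : Q = sQ ^ 2 := (Real.sq_sqrt hQ0).symm
  constructor
  · -- lam < sQ → vhat ≠ 0
    intro hlt hv0
    have hsQpos : 0 < sQ := lt_of_le_of_lt hlamnn hlt
    set t : ℝ := 1 - lam / sQ with htdef
    have hsQne : sQ ≠ 0 := hsQpos.ne'
    have ht0 : 0 < t := by
      rw [htdef]
      have : lam / sQ < 1 := (div_lt_one hsQpos).mpr hlt
      linarith
    have hmv := hmin (fun j => t * S j)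
    rw [hv0] at hmv
    have hz1 : (∑ j, ((0 : Fin p → ℝ) j - S j) ^ 2) = Q := by
      simp [hQdef]
    have hz2 : (∑ j, ((0 : Fin p → ℝ) j) ^ 2) = 0 := by simp
    have hv1 : (∑ j, (t * S j - S j) ^ 2) = (t - 1) ^ 2 * Q := by
      rw [Finset.mul_sum]
      exact Finset.sum_congr rfl fun j _ => by ring
    have hv2 : (∑ j, (t * S j) ^ 2) = t ^ 2 * Q := by
      rw [Finset.mul_sum]
      exact Finset.sum_congr rfl fun j _ => by ring
    have hv3 : Real.sqrt (t ^ 2 * Q) = t * sQ := by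
      rw [Real.sqrt_mul (sq_nonneg t), Real.sqrt_sq ht0.le, hsQdef]
    rw [hz1, hz2, hv1, hv2, hv3, Real.sqrt_zero] at hmv
    have ht1 : (t - 1) ^ 2 * Q = lam ^ 2 := by
      have : t - 1 = -(lam / sQ) := by rw [htdef]; ring
      rw [this, hQsq]
      field_simp
    have ht2 : t * sQ = sQ - lam := by
      rw [htdef]; field_simp
    rw [ht1, ht2] at hmv
    nlinarith [hmv, hQsq, mul_pos (sub_pos.mpr hlt) (sub_pos.mpr hlt)]
  · -- vhat ≠ 0 → lam < sQ
    intro hv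
    by_contra hle
    push_neg at hle
    obtain ⟨j0, hj0⟩ := Function.ne_iff.mp hv
    have hj0' : vhat j0 ≠ 0 := by simpa using hj0
    set V := ∑ j, vhat j ^ 2 with hVdef
    have hVpos : 0 < V :=
      Finset.sum_pos' (fun j _ => sq_nonneg _) ⟨j0, Finset.mem_univ j0, sq_pos_of_ne_zero hj0'⟩
    set sV := Real.sqrt V with hsVdef
    have hsV0 : 0 ≤ sV := Real.sqrt_nonneg _
    have hVsq : V = sV ^ 2 := (Real.sq_sqrt hVpos.le).symm
    set I := ∑ j, vhat j * S j with hIdef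
    have hCS : I ≤ sV * sQ := by
      calc I ≤ |I| := le_abs_self I
        _ = Real.sqrt (I ^ 2) := (Real.sqrt_sq_eq_abs I).symm
        _ ≤ Real.sqrt (V * Q) :=
            Real.sqrt_le_sqrt (Finset.sum_mul_sq_le_sq_mul_sq _ _ _)
        _ = sV * sQ := Real.sqrt_mul hVpos.le Q
    have hmv := hmin 0
    have hz1 : (∑ j, ((0 : Fin p → ℝ) j - S j) ^ 2) = Q := by simp [hQdef]
    have hz2 : (∑ j, ((0 : Fin p → ℝ) j) ^ 2) = 0 := by simp
    have hexp : (∑ j, (vhat j - S j) ^ 2) = V - 2 * I + Q := by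
      rw [hVdef, hIdef, hQdef, Finset.mul_sum, ← Finset.sum_sub_distrib,
        ← Finset.sum_add_distrib]
      exact Finset.sum_congr rfl fun j _ => by ring
    rw [hz1, hz2, hexp, Real.sqrt_zero] at hmv
    have hsVpos : 0 < sV := Real.sqrt_pos.mpr hVpos
    linarith [hmv, hCS, hVpos, mul_le_mul_of_nonneg_left hle hsV0, mul_comm sV lam]
end

section
/- Let p ≥ 1 and λ > 0, and define φ : ℝ^p \ {0} → ℝ^p by φ(v) = v + λ·v/‖v‖₂. Then φ is Fréchet differentiable at every v ≠ 0, its derivative is the linear map Dφ(v) = Id + (λ/‖v‖₂)(Id − u uᵀ) where u = v/‖v‖₂, and the determinant of Dφ(v) equals ((‖v‖₂ + λ)/‖v‖₂)^{p−1}. -/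
open scoped RealInnerProductSpace


variable {E : Type*} [NormedAddCommGroup E] [InnerProductSpace ℝ E]

theorem hasFDerivAt_norm' {v : E} (hv : v ≠ 0) :
    HasFDerivAt (‖·‖) (innerSL ℝ (‖v‖⁻¹ • v)) v := by
  have h1 : HasFDerivAt (fun x : E => ‖x‖ ^ 2) (2 • (innerSL ℝ v)) v :=
    (hasStrictFDerivAt_norm_sq v).hasFDerivAt
  have h2 : HasDerivAt (√·) (1 / (2 * √(‖v‖ ^ 2))) (‖v‖ ^ 2) :=
    Real.hasDerivAt_sqrt (pow_ne_zero 2 (norm_ne_zero_iff.mpr hv))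
  have h3 := h2.comp_hasFDerivAt v h1
  have he : (fun x : E => √(‖x‖ ^ 2)) = (‖·‖) := by
    ext x; rw [Real.sqrt_sq (norm_nonneg x)]
  rw [show ((fun x => √x) ∘ fun x : E => ‖x‖ ^ 2) = (‖·‖) from he] at h3
  refine h3.congr_fderiv ?_
  ext x
  have hvn : ‖v‖ ≠ 0 := norm_ne_zero_iff.mpr hv
  simp [Real.sqrt_sq (norm_nonneg v), real_inner_smul_left]
  ring

/-- the map `φ(v) = v + λ v / ‖v‖` is differentiable away from zero with
derivative `Id + (λ/‖v‖)(Id − u uᵀ)` whose determinant is `((‖v‖+λ)/‖v‖)^{p−1}`. -/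
theorem jacobian_of_kkt_map (p : ℕ) (hp : 1 ≤ p) (lam : ℝ) (hlam : 0 < lam)
    (φ : EuclideanSpace ℝ (Fin p) → EuclideanSpace ℝ (Fin p))
    (hφ : ∀ v, v ≠ 0 → φ v = v + (lam / ‖v‖) • v)
    (v : EuclideanSpace ℝ (Fin p)) (hv : v ≠ 0)
    (u : EuclideanSpace ℝ (Fin p)) (hu : u = ‖v‖⁻¹ • v)
    (Dφ : EuclideanSpace ℝ (Fin p) →L[ℝ] EuclideanSpace ℝ (Fin p))
    (hDφ : Dφ = ContinuousLinearMap.id ℝ (EuclideanSpace ℝ (Fin p)) +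
      (lam / ‖v‖) • (ContinuousLinearMap.id ℝ (EuclideanSpace ℝ (Fin p)) -
        (innerSL ℝ u).smulRight u)) :
    HasFDerivAt φ Dφ v ∧
    LinearMap.det (Dφ : EuclideanSpace ℝ (Fin p) →ₗ[ℝ] EuclideanSpace ℝ (Fin p)) =
      ((‖v‖ + lam) / ‖v‖) ^ (p - 1) := by
  have hvn : ‖v‖ ≠ 0 := norm_ne_zero_iff.mpr hv
  have hun : ‖u‖ = 1 := by
    rw [hu, norm_smul, norm_inv, norm_norm, inv_mul_cancel₀ hvn]
  constructor
  · -- derivative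
    have hnorm := hasFDerivAt_norm' hv
    have hc' : HasDerivAt (fun y : ℝ => lam / y) (lam * (-(‖v‖ ^ 2)⁻¹)) ‖v‖ := by
      simpa [div_eq_mul_inv] using (hasDerivAt_inv hvn).const_mul lam
    have hc := hc'.comp_hasFDerivAt v hnorm
    have hsmul := hc.smul (hasFDerivAt_id v)
    have hg := (hasFDerivAt_id v).add hsmul
    have heq : (fun y : EuclideanSpace ℝ (Fin p) => y + (lam / ‖y‖) • y) =ᶠ[nhds v] φ := by
      filter_upwards [IsOpen.mem_nhds isOpen_compl_singleton hv] with w hw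
      exact (hφ w hw).symm
    have hg' := hg.congr_of_eventuallyEq heq.symm
    have hDeq : Dφ = ContinuousLinearMap.id ℝ (EuclideanSpace ℝ (Fin p)) +
        ((lam / ‖v‖) • ContinuousLinearMap.id ℝ (EuclideanSpace ℝ (Fin p)) +
          ((lam * (-(‖v‖ ^ 2)⁻¹)) • innerSL ℝ (‖v‖⁻¹ • v)).smulRight (id v)) := by
      rw [hDφ]
      ext x
      simp [hu, real_inner_smul_left, smul_smul]
      ring_nf
    rw [hDeq]
    exact hg'
  · -- determinant
    have hpo : 0 < p := hp
    let i0 : Fin p := ⟨0, hpo⟩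
    have hfr : Module.finrank ℝ (EuclideanSpace ℝ (Fin p)) = Fintype.card (Fin p) := by
      simp
    have horth : Orthonormal ℝ (Set.restrict {i0} (fun _ : Fin p => u)) := by
      refine ⟨fun i => hun, fun i j hij => absurd ?_ hij⟩
      ext
      rw [show i.1 = i0 from i.2, show j.1 = i0 from j.2]
    obtain ⟨b, hb⟩ := horth.exists_orthonormalBasis_extension_of_card_eq hfr
    have hbu : b i0 = u := hb i0 rfl
    set c : ℝ := lam / ‖v‖ with hc
    set d : Fin p → ℝ := fun j => if j = i0 then 1 else 1 + c with hd
    have huu : ⟪u, u⟫ = 1 := by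
      rw [real_inner_self_eq_norm_sq, hun]; norm_num
    have happ : ∀ j, Dφ (b j) = d j • b j := by
      intro j
      by_cases hj : j = i0
      · subst hj
        rw [hbu, hDφ]
        simp [huu, hd, hun]
      · have hinner : ⟪u, b j⟫ = 0 := by
          rw [← hbu]
          exact b.orthonormal.2 (fun h => hj h.symm)
        rw [hDφ]
        simp [hinner, hd, hj, add_smul]
    have hM : LinearMap.toMatrix b.toBasis b.toBasis
        (Dφ : EuclideanSpace ℝ (Fin p) →ₗ[ℝ] EuclideanSpace ℝ (Fin p)) = Matrix.diagonal d := by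
      ext i j
      rw [LinearMap.toMatrix_apply]
      simp only [OrthonormalBasis.coe_toBasis, ContinuousLinearMap.coe_coe]
      rw [happ j, map_smul]
      rw [show b j = b.toBasis j from congrFun (OrthonormalBasis.coe_toBasis b).symm j,
        Module.Basis.repr_self]
      by_cases hij : i = j
      · subst hij; simp
      · simp [Matrix.diagonal, hij, Finsupp.single_apply, Ne.symm hij]
    have hdet := LinearMap.det_toMatrix b.toBasis
      (Dφ : EuclideanSpace ℝ (Fin p) →ₗ[ℝ] EuclideanSpace ℝ (Fin p))
    rw [← hdet, hM, Matrix.det_diagonal]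
    have hsplit : (Finset.univ : Finset (Fin p)) = insert i0 (Finset.univ.erase i0) :=
      (Finset.insert_erase (Finset.mem_univ i0)).symm
    rw [hsplit, Finset.prod_insert (Finset.notMem_erase _ _)]
    have h1 : d i0 = 1 := by simp [hd]
    have h2 : ∏ j ∈ Finset.univ.erase i0, d j = (1 + c) ^ (p - 1) := by
      rw [Finset.prod_congr rfl (fun j hj => ?_), Finset.prod_const,
        Finset.card_erase_of_mem (Finset.mem_univ i0), Finset.card_univ, Fintype.card_fin]
      simp [hd, Finset.ne_of_mem_erase hj]
    rw [h1, h2, one_mul]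
    congr 1
    rw [add_div, div_self hvn, hc]
end
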